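/- Let (A, 𝔪) be a Henselian local ring with residue field k (every monic polynomial X^n + … + a_1 X + a_0 with a_1 a unit and a_0 ∈ 𝔪 has a root in 𝔪). Then every polynomial f(X) = a_n X^n + … + a_1 X + a_0 ∈ A[X] (not necessarily monic) with a_1 ∈ A^× and a_0 ∈ 𝔪 has a unique root in 𝔪. -/

import Mathlib

open Polynomial

section Aux

variable {A : Type*} [CommRing A]

lemma coeff_comp_C_mul_X' (p : A[X]) (a : A) (i : ℕ) :
    (p.comp (C a * X)).coeff i = p.coeff i * a ^ i := by
  induction p using Polynomial.induction_on' with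
  | add p q hp hq => simp [add_comp, hp, hq, add_mul]
  | monomial n c =>
      rw [← C_mul_X_pow_eq_monomial]
      simp only [mul_comp, C_comp, X_pow_comp, mul_pow, ← C_pow, coeff_C_mul, coeff_C_mul_X_pow,
        coeff_X_pow, mul_ite, mul_one, mul_zero, boole_mul, ite_mul, zero_mul]
      split_ifs with h
      · subst h; ring
      · rfl

lemma isUnit_of_unit_add_mem [IsLocalRing A] {u m : A} (hu : IsUnit u)
    (hm : m ∈ IsLocalRing.maximalIdeal A) : IsUnit (u + m) := by
  by_contra h
  have h1 : u + m ∈ IsLocalRing.maximalIdeal A := h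
  have h2 : u ∈ IsLocalRing.maximalIdeal A := by
    have := Ideal.sub_mem _ h1 hm
    simpa using this
  exact h2 hu

lemma isUnit_iff_residue_ne_zero [IsLocalRing A] (x : A) :
    IsUnit x ↔ IsLocalRing.residue A x ≠ 0 := by
  constructor
  · intro hx h0
    have : x ∈ IsLocalRing.maximalIdeal A := (Ideal.Quotient.eq_zero_iff_mem).mp h0
    exact this hx
  · intro h
    by_contra hx
    exact h (Ideal.Quotient.eq_zero_iff_mem.mpr hx)

/-- Uniqueness of roots in the maximal ideal when the linear coefficient is a unit. -/
lemma root_in_max_unique [IsLocalRing A] (f : A[X]) (h1 : IsUnit (f.coeff 1))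
    {α β : A} (hα : α ∈ IsLocalRing.maximalIdeal A) (hβ : β ∈ IsLocalRing.maximalIdeal A)
    (eα : f.eval α = 0) (eβ : f.eval β = 0) : α = β := by
  set g := f.divX with hg
  have hf : X * g + C (f.coeff 0) = f := X_mul_divX_add f
  have evα : α * g.eval α + f.coeff 0 = 0 := by
    have h := congrArg (Polynomial.eval α) hf
    simp only [eval_add, eval_mul, eval_X, eval_C] at h
    rw [eα] at h
    exact h
  have evβ : β * g.eval β + f.coeff 0 = 0 := by
    have h := congrArg (Polynomial.eval β) hf
    simp only [eval_add, eval_mul, eval_X, eval_C] at h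
    rw [eβ] at h
    exact h
  obtain ⟨c, hc⟩ : α - β ∣ g.eval α - g.eval β := sub_dvd_eval_sub α β g
  obtain ⟨d, hd⟩ : β - 0 ∣ g.eval β - g.eval 0 := sub_dvd_eval_sub β 0 g
  have hg0 : g.eval 0 = f.coeff 1 := by
    rw [← coeff_zero_eq_eval_zero, hg, coeff_divX]
  -- `(α - β) * (α * c + g.eval β) = 0`
  have key : (α - β) * (α * c + g.eval β) = 0 := by
    have : α * g.eval α - β * g.eval β = 0 := by
      have := congrArg₂ (· - ·) evα evβ
      simpa using this
    calc (α - β) * (α * c + g.eval β)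
        = α * (g.eval α - g.eval β) + (α - β) * g.eval β := by rw [hc]; ring
      _ = α * g.eval α - β * g.eval β := by ring
      _ = 0 := this
  -- the second factor is a unit
  have hunit : IsUnit (α * c + g.eval β) := by
    have hβd : g.eval β = f.coeff 1 + β * d := by
      have := hd
      rw [sub_zero] at this
      rw [hg0] at this
      linear_combination this
    have : α * c + g.eval β = f.coeff 1 + (α * c + β * d) := by rw [hβd]; ring
    rw [this]
    exact isUnit_of_unit_add_mem h1
      (Ideal.add_mem _ (Ideal.mul_mem_right _ _ hα) (Ideal.mul_mem_right _ _ hβ))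
  exact sub_eq_zero.mp (hunit.mul_left_eq_zero.mp key)

end Aux

/-- Over a Henselian local ring `(A, 𝔪)` (every monic polynomial with linear coefficient a
unit and constant coefficient in `𝔪` has a root in `𝔪`), every polynomial (not necessarily
monic) with linear coefficient a unit and constant coefficient in `𝔪` has a unique root
in `𝔪`. -/
theorem hensel_nonmonic {A : Type*} [CommRing A] [IsLocalRing A]
    (hHensel : ∀ f : Polynomial A, f.Monic → IsUnit (f.coeff 1) →
      f.coeff 0 ∈ IsLocalRing.maximalIdeal A →
      ∃ α ∈ IsLocalRing.maximalIdeal A, f.eval α = 0)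
    (f : Polynomial A) (h1 : IsUnit (f.coeff 1))
    (h0 : f.coeff 0 ∈ IsLocalRing.maximalIdeal A) :
    ∃! α : A, α ∈ IsLocalRing.maximalIdeal A ∧ f.eval α = 0 := by
  -- Existence
  set 𝔪 := IsLocalRing.maximalIdeal A with h𝔪
  set a0 := f.coeff 0 with ha0
  set a1 := f.coeff 1 with ha1
  set g := f.divX with hgdef
  have hf : X * g + C a0 = f := X_mul_divX_add f
  -- the auxiliary polynomial k with `f.eval (a0 * w) = a0 * k.eval w`
  set k : A[X] := 1 + X * (g.comp (C a0 * X)) with hk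
  have keval : ∀ w : A, k.eval w = 1 + w * g.eval (a0 * w) := by
    intro w
    simp [hk, eval_comp]
  have hfk : ∀ w : A, f.eval (a0 * w) = a0 * k.eval w := by
    intro w
    rw [keval w]
    have := congrArg (Polynomial.eval (a0 * w)) hf
    simp only [eval_add, eval_mul, eval_X, eval_C] at this
    rw [← this]; ring
  have kc0 : k.coeff 0 = 1 := by
    simp [hk, coeff_one, coeff_X_mul]
  have kc1 : k.coeff 1 = a1 := by
    have : (X * (g.comp (C a0 * X))).coeff 1 = (g.comp (C a0 * X)).coeff 0 := coeff_X_mul _ 0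
    simp only [hk, coeff_add, this, coeff_comp_C_mul_X', coeff_one, pow_zero, mul_one]
    rw [if_neg (by norm_num)]
    rw [hgdef, coeff_divX, zero_add, ha1]
  have kci : ∀ i : ℕ, k.coeff (i + 2) ∈ 𝔪 := by
    intro i
    have hx : (X * (g.comp (C a0 * X))).coeff (i + 2) = (g.comp (C a0 * X)).coeff (i + 1) :=
      coeff_X_mul _ (i + 1)
    have : k.coeff (i + 2) = g.coeff (i + 1) * a0 ^ (i + 1) := by
      simp [hk, hx, coeff_comp_C_mul_X', coeff_one]
    rw [this]
    exact Ideal.mul_mem_left _ _ (by rw [pow_succ]; exact Ideal.mul_mem_left _ _ h0)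
  -- residue field computations
  set φ := IsLocalRing.residue A with hφ
  set u := φ a1 with hu
  have hu0 : u ≠ 0 := (isUnit_iff_residue_ne_zero a1).mp h1
  have kmap : k.map φ = 1 + C u * X := by
    ext i
    match i with
    | 0 => simp [coeff_map, kc0]
    | 1 => simp [coeff_map, kc1, coeff_one, hu]
    | (i + 2) =>
        rw [coeff_map]
        have : φ (k.coeff (i + 2)) = 0 := Ideal.Quotient.eq_zero_iff_mem.mpr (kci i)
        rw [this]
        simp [coeff_one, coeff_C_mul, coeff_X]
  -- the reflected polynomial
  set e := k.natDegree + 2 with he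
  set K := reflect e k with hK
  have hdegk : k.natDegree ≤ e := by omega
  have hKe : K.coeff e = 1 := by
    rw [hK, coeff_reflect, revAt_le (le_refl e), Nat.sub_self, kc0]
  have hKle : K.natDegree ≤ e := by
    rw [natDegree_le_iff_coeff_eq_zero]
    intro N hN
    rw [hK, coeff_reflect, revAt_eq_self_of_lt hN]
    exact coeff_eq_zero_of_natDegree_lt (by omega)
  have hKmonic : K.Monic := monic_of_natDegree_le_of_coeff_eq_one e hKle hKe
  have Kmap : K.map φ = X ^ e + C u * X ^ (e - 1) := by
    rw [hK, ← reflect_map, kmap, reflect_add, reflect_one, reflect_C_mul]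
    congr 1
    conv_lhs => rw [show (X : (IsLocalRing.ResidueField A)[X]) = X ^ 1 from (pow_one _).symm]
    rw [reflect_monomial, revAt_le (by omega)]
  -- K(-a1) ∈ 𝔪 and K'(-a1) is a unit
  have hcomm : ∀ p : A[X], φ (p.eval (-a1)) = (p.map φ).eval (-u) := by
    intro p
    have h : (-u : IsLocalRing.ResidueField A) = φ (-a1) := by simp [hu]
    rw [h, eval_map, eval₂_at_apply]
  have hKeval : K.eval (-a1) ∈ 𝔪 := by
    rw [h𝔪, ← Ideal.Quotient.eq_zero_iff_mem]
    show φ (K.eval (-a1)) = 0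
    rw [hcomm K, Kmap]
    have h1e : e - 1 = k.natDegree + 1 := by omega
    rw [h1e]
    simp only [eval_add, eval_mul, eval_pow, eval_X, eval_C, h1e, he]
    rw [pow_succ (-u) (k.natDegree + 1)]
    ring
  have hKderiv : IsUnit (K.derivative.eval (-a1)) := by
    rw [isUnit_iff_residue_ne_zero]
    show φ (K.derivative.eval (-a1)) ≠ 0
    rw [hcomm K.derivative, ← derivative_map, Kmap]
    have h1e : e - 1 = k.natDegree + 1 := by omega
    have h2e : e - 1 - 1 = k.natDegree := by omega
    rw [derivative_add, derivative_X_pow, derivative_C_mul, derivative_X_pow, h2e, h1e]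
    simp only [eval_add, eval_mul, eval_pow, eval_X, eval_C, he]
    have expand : ((k.natDegree + 2 : ℕ) : IsLocalRing.ResidueField A) * (-u) ^ (k.natDegree + 1)
        + u * (((k.natDegree + 1 : ℕ) : IsLocalRing.ResidueField A) * (-u) ^ k.natDegree)
        = (-u) ^ (k.natDegree + 1) := by
      push_cast
      rw [pow_succ (-u) k.natDegree]
      ring
    rw [expand]
    exact pow_ne_zero _ (neg_ne_zero.mpr hu0)
  -- apply the Hensel hypothesis to the Taylor shift of K at -a1
  set M := Polynomial.taylor (-a1) K with hM
  have hMmonic : M.Monic := by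
    rw [hM, taylor_apply]
    exact hKmonic.comp_X_add_C _
  have hM0 : M.coeff 0 ∈ 𝔪 := by
    rw [hM, taylor_coeff_zero]; exact hKeval
  have hM1 : IsUnit (M.coeff 1) := by
    rw [hM, taylor_coeff_one]; exact hKderiv
  obtain ⟨t, ht𝔪, htroot⟩ := hHensel M hMmonic hM1 hM0
  -- v := t - a1 is a unit root of K
  have hKv : K.eval (t + -a1) = 0 := by
    rw [← taylor_eval (-a1) K (t), ← hM]
    exact htroot
  set v := t + -a1 with hv
  have hvunit : IsUnit v := by
    have : v = -a1 + t := by rw [hv]; ring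
    rw [this]
    exact isUnit_of_unit_add_mem h1.neg ht𝔪
  -- invert v and conclude k has a root
  obtain ⟨w, hw⟩ := hvunit.exists_right_inv
  have hw' : w * v = 1 := by rw [mul_comm]; exact hw
  haveI : Invertible w := ⟨v, hw, hw'⟩
  have hrefl := Polynomial.eval₂_reflect_mul_pow (RingHom.id A) w e k hdegk
  have hinv : (⅟ w : A) = v := invOf_eq_right_inv hw'
  rw [hinv] at hrefl
  have hkw : k.eval w = 0 := by
    have hKv' : eval₂ (RingHom.id A) v (reflect e k) = 0 := by
      rw [← eval]
      exact hKv
    rw [hKv', zero_mul] at hrefl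
    rw [eval]
    exact hrefl.symm
  -- the root of f
  refine ⟨a0 * w, ⟨Ideal.mul_mem_right _ _ h0, by rw [hfk w, hkw, mul_zero]⟩, ?_⟩
  intro β ⟨hβ𝔪, hβroot⟩
  exact root_in_max_unique f h1 hβ𝔪 (Ideal.mul_mem_right _ _ h0)
    hβroot (by rw [hfk w, hkw, mul_zero])
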